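/- Let k ≥ 3 and 2 ≤ t ≤ k. For x_1 = ⋯ = x_k = 1/p with p a prime, one has 1 - Σ_{j=t}^{k} (-1)^{j-t} C(j-1, t-1) e_j(1/p,...,1/p) = (p·G_{k,t}(p) + (-1)^{k-t+1}C(k-1,t-1)) / p^k, where e_j is the j-th elementary symmetric polynomial in k variables and G_{k,t}(x) = (1/x)(Σ_{j=0}^{t-1} C(k,j)(x-1)^{k-j} + (-1)^{k-t}C(k-1,t-1)). -/

import Mathlib

/-- The j-th elementary symmetric polynomial in k variables, evaluated at x : Fin k → ℚ. -/
def esym (k j : ℕ) (x : Fin k → ℚ) : ℚ :=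
  ∑ S ∈ Finset.powersetCard j (Finset.univ : Finset (Fin k)), ∏ i ∈ S, x i

/-- G_{k,t}(x) = (1/x)(Σ_{j=0}^{t-1} C(k,j)(x-1)^{k-j} + (-1)^{k-t} C(k-1,t-1)). -/
def G (k t : ℕ) (x : ℚ) : ℚ :=
  (1 / x) * (∑ j ∈ Finset.range t, (k.choose j : ℚ) * (x - 1) ^ (k - j) +
    (-1) ^ (k - t) * ((k - 1).choose (t - 1) : ℚ))

lemma esym_const (k j : ℕ) (c : ℚ) : esym k j (fun _ => c) = (k.choose j : ℚ) * c ^ j := by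
  unfold esym
  rw [Finset.sum_congr rfl (fun S hS => ?_)]
  · rw [Finset.sum_const, Finset.card_powersetCard, Finset.card_univ, Fintype.card_fin,
      nsmul_eq_mul]
  · rw [Finset.prod_const, (Finset.mem_powersetCard.mp hS).2]

lemma sub_pow_binom (x : ℚ) (m : ℕ) :
    (x - 1) ^ m = ∑ i ∈ Finset.range (m + 1), (-1 : ℚ) ^ (m - i) * (m.choose i : ℚ) * x ^ i := by
  have h := add_pow x (-1 : ℚ) m
  rw [show x + (-1 : ℚ) = x - 1 by ring] at h
  rw [h]
  exact Finset.sum_congr rfl fun i _ => by ring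

lemma lemB (k m : ℕ) (hm : m ≤ k) (x : ℚ) :
    ∑ i ∈ Finset.range (m + 1),
        (-1 : ℚ) ^ (m - i) * (((k - i).choose (m - i) : ℕ) : ℚ) * (k.choose i : ℚ) * x ^ i
      = (k.choose m : ℚ) * (x - 1) ^ m := by
  rw [sub_pow_binom, Finset.mul_sum]
  refine Finset.sum_congr rfl fun i hi => ?_
  have hi' : i ≤ m := Nat.lt_succ_iff.mp (Finset.mem_range.mp hi)
  have h := Nat.choose_mul (n := k) hi'
  have h2 : ((k.choose m : ℕ) : ℚ) * (m.choose i : ℚ)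
      = (k.choose i : ℚ) * ((k - i).choose (m - i) : ℚ) := by exact_mod_cast congrArg (Nat.cast (R := ℚ)) h
  linear_combination (-((-1 : ℚ) ^ (m - i) * x ^ i)) * h2

lemma key (k : ℕ) (x : ℚ) : ∀ n, n < k →
    ∑ i ∈ Finset.range (n + 1), (k.choose i : ℚ) * (x - 1) ^ i
      = ∑ i ∈ Finset.range (n + 1),
          (-1 : ℚ) ^ (n - i) * ((k - 1 - i).choose (n - i) : ℚ) * (k.choose i : ℚ) * x ^ i := by
  intro n
  induction n with
  | zero => intro _; simp
  | succ n ih =>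
    intro hn
    have ihn := ih (by omega)
    rw [Finset.sum_range_succ, ihn]
    rw [Finset.sum_range_succ (f := fun i =>
      (-1 : ℚ) ^ (n + 1 - i) * ((k - 1 - i).choose (n + 1 - i) : ℚ) * (k.choose i : ℚ) * x ^ i)]
    have hsplit : ∀ i ∈ Finset.range (n + 1),
        (-1 : ℚ) ^ (n + 1 - i) * ((k - 1 - i).choose (n + 1 - i) : ℚ) * (k.choose i : ℚ) * x ^ i
        = (-1 : ℚ) ^ (n + 1 - i) * ((k - i).choose (n + 1 - i) : ℚ) * (k.choose i : ℚ) * x ^ i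
          + (-1 : ℚ) ^ (n - i) * ((k - 1 - i).choose (n - i) : ℚ) * (k.choose i : ℚ) * x ^ i := by
      intro i hi
      have hi' : i ≤ n := Nat.lt_succ_iff.mp (Finset.mem_range.mp hi)
      have e1 : k - i = (k - 1 - i) + 1 := by omega
      have e2 : n + 1 - i = (n - i) + 1 := by omega
      have hp : (k - i).choose (n + 1 - i)
          = (k - 1 - i).choose (n - i) + (k - 1 - i).choose ((n - i) + 1) := by
        rw [e1, e2]; exact Nat.choose_succ_succ _ _
      have hp' : ((k - i).choose (n + 1 - i) : ℚ)
          = ((k - 1 - i).choose (n - i) : ℚ) + ((k - 1 - i).choose (n + 1 - i) : ℚ) := by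
        rw [hp, e2]; push_cast; ring
      have hsg : (-1 : ℚ) ^ (n + 1 - i) = -(-1 : ℚ) ^ (n - i) := by
        rw [e2, pow_succ]; ring
      rw [hp', hsg]; ring
    rw [Finset.sum_congr rfl hsplit, Finset.sum_add_distrib]
    have hB := lemB k (n + 1) (by omega) x
    rw [Finset.sum_range_succ] at hB
    have hlast : (-1 : ℚ) ^ (n + 1 - (n + 1)) * (((k - (n + 1)).choose (n + 1 - (n + 1)) : ℕ) : ℚ)
        * (k.choose (n + 1) : ℚ) * x ^ (n + 1)
        = (-1 : ℚ) ^ (n + 1 - (n + 1)) * ((k - 1 - (n + 1)).choose (n + 1 - (n + 1)) : ℚ)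
        * (k.choose (n + 1) : ℚ) * x ^ (n + 1) := by
      simp
    linarith [hB, hlast]

lemma icc_identity (k t : ℕ) (ht1 : 1 ≤ t) (ht2 : t ≤ k) (x : ℚ) :
    ∑ j ∈ Finset.Icc t k, (k.choose j : ℚ) * (x - 1) ^ (k - j)
      = ∑ j ∈ Finset.Icc t k,
          (-1 : ℚ) ^ (j - t) * ((j - 1).choose (t - 1) : ℚ) * (k.choose j : ℚ) * x ^ (k - j) := by
  have hL : ∑ j ∈ Finset.Icc t k, (k.choose j : ℚ) * (x - 1) ^ (k - j)
      = ∑ i ∈ Finset.range (k - t + 1), (k.choose i : ℚ) * (x - 1) ^ i := by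
    refine Finset.sum_bij' (fun j _ => k - j) (fun i _ => k - i) ?_ ?_ ?_ ?_ ?_
    · intro a ha; simp only [Finset.mem_Icc] at ha; simp only [Finset.mem_range]; omega
    · intro a ha; simp only [Finset.mem_range] at ha; simp only [Finset.mem_Icc]; omega
    · intro a ha; simp only [Finset.mem_Icc] at ha; show k - (k - a) = a; omega
    · intro a ha; simp only [Finset.mem_range] at ha; show k - (k - a) = a; omega
    · intro a ha'
      have ha := Finset.mem_Icc.mp ha'
      show (k.choose a : ℚ) * (x - 1) ^ (k - a) = (k.choose (k - a) : ℚ) * (x - 1) ^ (k - a)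
      rw [Nat.choose_symm ha.2]
  have hR : ∑ j ∈ Finset.Icc t k,
        (-1 : ℚ) ^ (j - t) * ((j - 1).choose (t - 1) : ℚ) * (k.choose j : ℚ) * x ^ (k - j)
      = ∑ i ∈ Finset.range (k - t + 1),
          (-1 : ℚ) ^ (k - t - i) * ((k - 1 - i).choose (k - t - i) : ℚ) * (k.choose i : ℚ) * x ^ i := by
    refine Finset.sum_bij' (fun j _ => k - j) (fun i _ => k - i) ?_ ?_ ?_ ?_ ?_
    · intro a ha; simp only [Finset.mem_Icc] at ha; simp only [Finset.mem_range]; omega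
    · intro a ha; simp only [Finset.mem_range] at ha; simp only [Finset.mem_Icc]; omega
    · intro a ha; simp only [Finset.mem_Icc] at ha; show k - (k - a) = a; omega
    · intro a ha; simp only [Finset.mem_range] at ha; show k - (k - a) = a; omega
    · intro a ha'
      have ha := Finset.mem_Icc.mp ha'
      show (-1 : ℚ) ^ (a - t) * ((a - 1).choose (t - 1) : ℚ) * (k.choose a : ℚ) * x ^ (k - a)
        = (-1 : ℚ) ^ (k - t - (k - a)) * ((k - 1 - (k - a)).choose (k - t - (k - a)) : ℚ)
          * (k.choose (k - a) : ℚ) * x ^ (k - a)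
      have e1 : k - t - (k - a) = a - t := by omega
      have e2 : k - 1 - (k - a) = a - 1 := by omega
      have e3 : (a - 1).choose (a - t) = (a - 1).choose (t - 1) := by
        have e4 : a - t = (a - 1) - (t - 1) := by omega
        rw [e4, Nat.choose_symm (by omega)]
      rw [e1, e2, e3, Nat.choose_symm ha.2]
  rw [hL, hR]
  exact key k x (k - t) (by omega)

theorem local_factor_eval (k t : ℕ) (hk : 3 ≤ k) (ht1 : 2 ≤ t) (ht2 : t ≤ k)
    (p : ℕ) (hp : p.Prime) :
    1 - ∑ j ∈ Finset.Icc t k, (-1 : ℚ) ^ (j - t) * ((j - 1).choose (t - 1) : ℚ) *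
        esym k j (fun _ => 1 / (p : ℚ)) =
      ((p : ℚ) * G k t p + (-1) ^ (k - t + 1) * ((k - 1).choose (t - 1) : ℚ)) /
        (p : ℚ) ^ k := by
  have hp0 : (p : ℚ) ≠ 0 := Nat.cast_ne_zero.mpr hp.ne_zero
  set x : ℚ := (p : ℚ) with hx
  -- simplify RHS numerator
  have hG : x * G k t x + (-1 : ℚ) ^ (k - t + 1) * ((k - 1).choose (t - 1) : ℚ)
      = ∑ j ∈ Finset.range t, (k.choose j : ℚ) * (x - 1) ^ (k - j) := by
    unfold G
    rw [pow_succ]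
    field_simp
    ring
  rw [hG, eq_div_iff (pow_ne_zero k hp0)]
  -- simplify LHS
  have hterm : ∀ j ∈ Finset.Icc t k,
      ((-1 : ℚ) ^ (j - t) * ((j - 1).choose (t - 1) : ℚ) * esym k j (fun _ => 1 / x)) * x ^ k
      = (-1 : ℚ) ^ (j - t) * ((j - 1).choose (t - 1) : ℚ) * (k.choose j : ℚ) * x ^ (k - j) := by
    intro j hj
    have hjk : j ≤ k := (Finset.mem_Icc.mp hj).2
    rw [esym_const]
    have : (1 / x) ^ j * x ^ k = x ^ (k - j) := by
      field_simp
      rw [pow_sub₀ x hp0 hjk, one_div, inv_pow, mul_comm]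
    calc ((-1 : ℚ) ^ (j - t) * ((j - 1).choose (t - 1) : ℚ) * ((k.choose j : ℚ) * (1 / x) ^ j)) * x ^ k
        = (-1 : ℚ) ^ (j - t) * ((j - 1).choose (t - 1) : ℚ) * (k.choose j : ℚ) * ((1 / x) ^ j * x ^ k) := by ring
      _ = _ := by rw [this]
  rw [sub_mul, one_mul, Finset.sum_mul, Finset.sum_congr rfl hterm]
  -- binomial expansion of x^k
  have hbin : x ^ k = ∑ j ∈ Finset.range (k + 1), (k.choose j : ℚ) * (x - 1) ^ (k - j) := by
    have h := add_pow (x - 1) (1 : ℚ) k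
    rw [show x - 1 + 1 = x by ring] at h
    rw [h, ← Finset.sum_range_reflect]
    refine Finset.sum_congr rfl fun j hj => ?_
    have hjk : j ≤ k := Nat.lt_succ_iff.mp (Finset.mem_range.mp hj)
    simp only [one_pow, mul_one]
    have e1 : k + 1 - 1 - j = k - j := by omega
    rw [e1, Nat.choose_symm hjk]
    ring
  have hsplit : ∑ j ∈ Finset.range (k + 1), (k.choose j : ℚ) * (x - 1) ^ (k - j)
      = ∑ j ∈ Finset.range t, (k.choose j : ℚ) * (x - 1) ^ (k - j)
        + ∑ j ∈ Finset.Icc t k, (k.choose j : ℚ) * (x - 1) ^ (k - j) := by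
    rw [Finset.range_eq_Ico, ← Finset.sum_Ico_consecutive _ (Nat.zero_le t) (by omega : t ≤ k + 1),
      Finset.Ico_add_one_right_eq_Icc]
    rw [Finset.range_eq_Ico]
  rw [hbin, hsplit, icc_identity k t (by omega) ht2 x]
  ring
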